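/- Let γ = [[α,β],[a,b]] be a real 2×2 matrix with αb − βa = 1, embedded in SL(3,ℝ) as g = [[α,β,0],[a,b,0],[0,0,1]]. Let x₁, x₂, x₃ be real, y₁ > 0, y₂ > 0, let n(x) be the upper unitriangular matrix with rows (1,x₂,x₃), (0,1,x₁), (0,0,1), and let t(y₁,y₂) = diag(y₁y₂, y₁, 1). Then there exist x* ∈ ℝ³ and an orthogonal 3×3 matrix k of determinant 1 such that g · n(x) · t(y₁,y₂) = n(x*) · t(y₁*, y₂*) · k, where y₁* = y₁·√( y₂²a² + (a x₂ + b)² ) and y₂* = y₂ / ( y₂²a² + (a x₂ + b)² ). -/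

import Mathlib

set_option maxHeartbeats 1000000 in
/-- Left translation by an embedded SL(2,ℝ) element: the Iwasawa `y`-coordinates of
`g·n(x)·t(y₁,y₂)` are `y₁* = y₁√(y₂²a² + (ax₂+b)²)` and `y₂* = y₂/(y₂²a² + (ax₂+b)²)`. -/
theorem stmt_9 (α β a b : ℝ) (h : α * b - β * a = 1)
    (x₁ x₂ x₃ : ℝ) (y₁ y₂ : ℝ) (hy₁ : 0 < y₁) (hy₂ : 0 < y₂) :
    ∃ (x₁' x₂' x₃' : ℝ) (k : Matrix (Fin 3) (Fin 3) ℝ),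
      k.transpose * k = 1 ∧ k.det = 1 ∧
      (!![α, β, 0; a, b, 0; 0, 0, 1] : Matrix (Fin 3) (Fin 3) ℝ) *
          !![1, x₂, x₃; 0, 1, x₁; 0, 0, 1] *
          Matrix.diagonal ![y₁ * y₂, y₁, 1]
        = !![1, x₂', x₃'; 0, 1, x₁'; 0, 0, 1] *
            Matrix.diagonal
              ![(y₁ * Real.sqrt (y₂ ^ 2 * a ^ 2 + (a * x₂ + b) ^ 2)) *
                  (y₂ / (y₂ ^ 2 * a ^ 2 + (a * x₂ + b) ^ 2)),
                y₁ * Real.sqrt (y₂ ^ 2 * a ^ 2 + (a * x₂ + b) ^ 2), 1] * k := by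
  have hD0 : 0 < y₂ ^ 2 * a ^ 2 + (a * x₂ + b) ^ 2 := by
    rcases eq_or_ne a 0 with ha | ha
    · have hb : b ≠ 0 := by
        intro hb; rw [ha, hb] at h; simp at h
      have hb2 : 0 < b ^ 2 := by positivity
      subst ha; nlinarith [hb2]
    · positivity
  have hDne : y₂ ^ 2 * a ^ 2 + (a * x₂ + b) ^ 2 ≠ 0 := hD0.ne'
  have hrs0 : 0 < Real.sqrt (y₂ ^ 2 * a ^ 2 + (a * x₂ + b) ^ 2) := Real.sqrt_pos.mpr hD0
  have hrs2 : Real.sqrt (y₂ ^ 2 * a ^ 2 + (a * x₂ + b) ^ 2) ^ 2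
      = y₂ ^ 2 * a ^ 2 + (a * x₂ + b) ^ 2 := Real.sq_sqrt hD0.le
  generalize hgen : Real.sqrt (y₂ ^ 2 * a ^ 2 + (a * x₂ + b) ^ 2) = r
  rw [hgen] at hrs0 hrs2
  have hr0 : 0 < r := hrs0
  have hr2' : r ^ 2 = y₂ ^ 2 * a ^ 2 + (a * x₂ + b) ^ 2 := hrs2
  have hrne : r ≠ 0 := hr0.ne'
  refine ⟨a * x₃ + b * x₁, (α * a * y₂ ^ 2 + (a * x₂ + b) * (α * x₂ + β)) / (y₂ ^ 2 * a ^ 2 + (a * x₂ + b) ^ 2),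
    α * x₃ + β * x₁,
    !![(a * x₂ + b) / r, -(a * y₂) / r, 0; (a * y₂) / r, (a * x₂ + b) / r, 0; 0, 0, 1],
    ?_, ?_, ?_⟩
  · have hkT : Matrix.transpose (!![(a * x₂ + b) / r, -(a * y₂) / r, 0; (a * y₂) / r,
        (a * x₂ + b) / r, 0; 0, 0, 1] : Matrix (Fin 3) (Fin 3) ℝ)
        = !![(a * x₂ + b) / r, (a * y₂) / r, 0; -(a * y₂) / r, (a * x₂ + b) / r, 0;
        0, 0, 1] := by
      ext i j; fin_cases i <;> fin_cases j <;> rfl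
    rw [hkT, Matrix.mul_fin_three, Matrix.one_fin_three]
    ext i j
    fin_cases i <;> fin_cases j <;> (try simp [Matrix.vecHead, Matrix.vecTail]) <;>
      (try field_simp) <;>
      linarith [hr2']
  · rw [Matrix.det_fin_three]
    simp
    field_simp
    linarith [hr2']
  · rw [show (Matrix.diagonal ![y₁ * y₂, y₁, (1:ℝ)]) = !![y₁*y₂,0,0;0,y₁,0;0,0,1] by
        ext i j; fin_cases i <;> fin_cases j <;> simp [Matrix.diagonal_apply, Matrix.vecHead, Matrix.vecTail, Function.comp],
      show (Matrix.diagonal ![(y₁ * r) * (y₂ / (y₂ ^ 2 * a ^ 2 + (a * x₂ + b) ^ 2)), y₁ * r, (1:ℝ)])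
          = !![(y₁ * r) * (y₂ / (y₂ ^ 2 * a ^ 2 + (a * x₂ + b) ^ 2)),0,0;0,y₁ * r,0;0,0,1] by
        ext i j; fin_cases i <;> fin_cases j <;> simp [Matrix.diagonal_apply, Matrix.vecHead, Matrix.vecTail, Function.comp],
      Matrix.mul_fin_three, Matrix.mul_fin_three, Matrix.mul_fin_three, Matrix.mul_fin_three]
    ext i j
    fin_cases i <;> fin_cases j <;> (try simp [Matrix.vecHead, Matrix.vecTail]) <;>
      (try field_simp)
    · linear_combination (a * x₂ + b) * h
    · rw [eq_div_iff (by rw [show x₂ * a + b = a * x₂ + b by ring]; exact hDne)]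
      linear_combination (-(y₂ ^ 2 * a)) * h
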